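/- Let Δ be the 2s×2s matrix [[0, I],[−I, 0]] in s+s block form, let J_B = Δ⁻¹ (the canonical complex structure), let D be an invertible real s×s matrix, and let K be the block-diagonal matrix [[I, 0],[0, D]]. Then K J_B K⁻¹ is a complex structure with respect to Δ if and only if D is symmetric and positive definite. In particular, for s ≥ 2 and D nonsymmetric, the nondegenerate Gaussian channel with matrix K is not gauge-covariant with respect to the input complex structure K J_B K⁻¹ candidate. -/

import Mathlib

open Matrix

/-- The symplectic matrix `Δ = [[0, I],[-I, 0]]` in `s+s` block form (coordinates
rearranged as `(x₁,…,x_s,y₁,…,y_s)`). -/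
def SymplB (s : ℕ) : Matrix (Fin s ⊕ Fin s) (Fin s ⊕ Fin s) ℝ :=
  Matrix.fromBlocks 0 1 (-1) 0

/-- A real `2s × 2s` matrix `J` is a complex structure with respect to `Δ` if
`J² = -I`, `ΔJ = -JᵀΔ`, and `ΔJ` is positive semidefinite. -/
def IsComplexStructureB {s : ℕ} (J : Matrix (Fin s ⊕ Fin s) (Fin s ⊕ Fin s) ℝ) : Prop :=
  J * J = -1 ∧ SymplB s * J = -(Jᵀ * SymplB s) ∧ (SymplB s * J).PosSemidef

lemma symplB_inv (s : ℕ) : (SymplB s)⁻¹ = Matrix.fromBlocks 0 (-1) 1 0 := by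
  apply Matrix.inv_eq_right_inv
  rw [SymplB, Matrix.fromBlocks_multiply]
  simp [← Matrix.fromBlocks_one]

lemma blockK_inv {s : ℕ} {D : Matrix (Fin s) (Fin s) ℝ} (hD : IsUnit D.det) :
    (Matrix.fromBlocks (1 : Matrix (Fin s) (Fin s) ℝ) 0 0 D)⁻¹ =
      Matrix.fromBlocks 1 0 0 D⁻¹ := by
  apply Matrix.inv_eq_right_inv
  rw [Matrix.fromBlocks_multiply]
  simp [Matrix.mul_nonsing_inv D hD, ← Matrix.fromBlocks_one]

lemma psd_fromBlocks_diag {s : ℕ} {A B : Matrix (Fin s) (Fin s) ℝ}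
    (hA : A.PosSemidef) (hB : B.PosSemidef) :
    (Matrix.fromBlocks A 0 0 B).PosSemidef := by
  rw [Matrix.posSemidef_iff_dotProduct_mulVec]
  constructor
  · show (Matrix.fromBlocks A 0 0 B)ᴴ = _
    rw [Matrix.fromBlocks_conjTranspose, hA.1, hB.1, Matrix.conjTranspose_zero]
  · intro x
    have hx : x = Sum.elim (x ∘ Sum.inl) (x ∘ Sum.inr) := (Sum.elim_comp_inl_inr x).symm
    rw [hx, Matrix.fromBlocks_mulVec]
    simp only [Sum.elim_comp_inl, Sum.elim_comp_inr, Matrix.zero_mulVec, add_zero, zero_add,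
      star_trivial]
    rw [sumElim_dotProduct_sumElim]
    have h1 := (Matrix.posSemidef_iff_dotProduct_mulVec.mp hA).2 (x ∘ Sum.inl)
    have h2 := (Matrix.posSemidef_iff_dotProduct_mulVec.mp hB).2 (x ∘ Sum.inr)
    simp only [star_trivial] at h1 h2
    positivity

/-- Let `J_B = Δ⁻¹` be the canonical complex structure, `D` an
invertible real `s×s` matrix and `K = [[I,0],[0,D]]`.  Then `K J_B K⁻¹` is a complex
structure with respect to `Δ` if and only if `D` is symmetric and positive definite.
In particular, for `s ≥ 2` and nonsymmetric `D` the corresponding nondegenerate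
Gaussian channel is not gauge-covariant with respect to this candidate input complex
structure. -/
theorem blockDiag_conj_complexStructure_iff (s : ℕ)
    (D : Matrix (Fin s) (Fin s) ℝ) (hD : IsUnit D.det) :
    IsComplexStructureB
      ((Matrix.fromBlocks 1 0 0 D) * (SymplB s)⁻¹ * (Matrix.fromBlocks 1 0 0 D)⁻¹) ↔
    (D.IsSymm ∧ D.PosDef) := by
  have hJ : (Matrix.fromBlocks 1 0 0 D) * (SymplB s)⁻¹ * (Matrix.fromBlocks 1 0 0 D)⁻¹ =
      Matrix.fromBlocks 0 (-D⁻¹) D 0 := by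
    rw [symplB_inv, blockK_inv hD, Matrix.fromBlocks_multiply, Matrix.fromBlocks_multiply]
    simp
  have hDJ : SymplB s * Matrix.fromBlocks 0 (-D⁻¹) D 0 = Matrix.fromBlocks D 0 0 D⁻¹ := by
    rw [SymplB, Matrix.fromBlocks_multiply]
    simp
  have hJT : -((Matrix.fromBlocks 0 (-D⁻¹) D 0)ᵀ * SymplB s) =
      Matrix.fromBlocks Dᵀ 0 0 D⁻¹ᵀ := by
    rw [SymplB, Matrix.fromBlocks_transpose, Matrix.fromBlocks_multiply]
    simp [Matrix.fromBlocks_neg]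
  have hJJ : (Matrix.fromBlocks 0 (-D⁻¹) D 0 : Matrix (Fin s ⊕ Fin s) (Fin s ⊕ Fin s) ℝ) *
      Matrix.fromBlocks 0 (-D⁻¹) D 0 = -1 := by
    have h1 : (-1 : Matrix (Fin s ⊕ Fin s) (Fin s ⊕ Fin s) ℝ) =
        Matrix.fromBlocks (-1) 0 0 (-1) := by
      rw [← Matrix.fromBlocks_one, Matrix.fromBlocks_neg, neg_zero]
    rw [h1, Matrix.fromBlocks_multiply]
    simp [Matrix.nonsing_inv_mul D hD, Matrix.mul_nonsing_inv D hD]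
  rw [IsComplexStructureB, hJ, hDJ, hJT, hJJ]
  constructor
  · rintro ⟨-, h2, h3⟩
    obtain ⟨hsym, -, -, -⟩ := Matrix.fromBlocks_inj.mp h2
    have hsym' : D.IsSymm := hsym.symm
    have hherm : D.IsHermitian := hsym'
    have hpsd : D.PosSemidef := by
      refine Matrix.posSemidef_iff_dotProduct_mulVec.mpr ⟨hherm, fun x => ?_⟩
      have := (Matrix.posSemidef_iff_dotProduct_mulVec.mp h3).2 (Sum.elim x 0)
      rw [Matrix.fromBlocks_mulVec] at this
      simpa [sumElim_dotProduct_sumElim] using this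
    refine ⟨hsym', Matrix.posDef_iff_dotProduct_mulVec.mpr ⟨hherm, fun x hx => ?_⟩⟩
    rcases ((Matrix.posSemidef_iff_dotProduct_mulVec.mp hpsd).2 x).lt_or_eq with h | h
    · simpa using h
    · exfalso
      have h0 : D *ᵥ x = 0 := (hpsd.dotProduct_mulVec_zero_iff x).mp h.symm
      have hinj : Function.Injective D.mulVec := by
        rw [Matrix.mulVec_injective_iff_isUnit]
        exact (Matrix.isUnit_iff_isUnit_det D).mpr hD
      exact hx (hinj (by simpa using h0))
  · rintro ⟨hsym, hpd⟩
    have hinv : D⁻¹ᵀ = D⁻¹ := by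
      rw [Matrix.transpose_nonsing_inv, hsym.eq]
    refine ⟨rfl, ?_, psd_fromBlocks_diag hpd.posSemidef hpd.inv.posSemidef⟩
    rw [hsym.eq, hinv]
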